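/- For real numbers λ₁,…,λₙ, if H_r = 0 and H_{r+1} = 0 for some 1 ≤ r < n, then H_j = 0 for all r ≤ j ≤ n; in particular, at most r−1 of the λᵢ are nonzero. -/

import Mathlib

open scoped Classical

/-- The `r`-th elementary symmetric polynomial of `λ₁, …, λₙ`. -/
noncomputable def esymm (n r : ℕ) (l : Fin n → ℝ) : ℝ :=
  ∑ s ∈ (Finset.univ : Finset (Fin n)).powersetCard r, ∏ i ∈ s, l i

open Polynomial

/-- For `P = ∏ (X - μ)` over a multiset of nonzero reals,
`(coeff 1)^2 - 2 (coeff 0)(coeff 2) = (coeff 0)^2 * Σ μ⁻²`. -/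
lemma coeff_sq_identity (R : Multiset ℝ) (hR : ∀ μ ∈ R, μ ≠ 0) :
    ((R.map fun μ => X - C μ).prod.coeff 1) ^ 2
      - 2 * ((R.map fun μ => X - C μ).prod.coeff 0)
          * ((R.map fun μ => X - C μ).prod.coeff 2)
      = ((R.map fun μ => X - C μ).prod.coeff 0) ^ 2
          * (R.map fun μ => (μ⁻¹) ^ 2).sum := by
  induction R using Multiset.induction_on with
  | empty => simp [coeff_one]
  | cons a R ih =>
      have ha : a ≠ 0 := hR a (Multiset.mem_cons_self a R)
      have hR' : ∀ μ ∈ R, μ ≠ 0 := fun μ hμ => hR μ (Multiset.mem_cons_of_mem hμ)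
      have IH := ih hR'
      set P := (R.map fun μ => X - C μ).prod with hP
      have hcons : ((a ::ₘ R).map fun μ => X - C μ).prod = (X - C a) * P := by
        rw [Multiset.map_cons, Multiset.prod_cons]
      rw [hcons, Multiset.map_cons, Multiset.sum_cons]
      have e0 : ((X - C a) * P).coeff 0 = -a * P.coeff 0 := by
        simp [sub_mul, coeff_X_mul]
      have e1 : ((X - C a) * P).coeff 1 = P.coeff 0 - a * P.coeff 1 := by
        simp [sub_mul, coeff_X_mul]
      have e2 : ((X - C a) * P).coeff 2 = P.coeff 1 - a * P.coeff 2 := by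
        simp [sub_mul, coeff_X_mul]
      rw [e0, e1, e2]
      have hainv : a * a⁻¹ = 1 := mul_inv_cancel₀ ha
      linear_combination a ^ 2 * IH +
        (-(P.coeff 0 ^ 2 * (a * a⁻¹ + 1))) * hainv

/-- A real-rooted polynomial with nonzero constant term cannot have both
`coeff 1 = 0` and `coeff 2 = 0` unless it is constant. -/
lemma no_consec_zero (q : ℝ[X]) (hq : q ≠ 0)
    (hsplit : Multiset.card q.roots = q.natDegree) (h0 : q.coeff 0 ≠ 0)
    (hdeg : 1 ≤ q.natDegree) (h1 : q.coeff 1 = 0) (h2 : q.coeff 2 = 0) : False := by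
  have hfac := Polynomial.C_leadingCoeff_mul_prod_multiset_X_sub_C (p := q) hsplit
  set R := q.roots with hRdef
  set P := (R.map fun μ => X - C μ).prod with hPdef
  have hlc : q.leadingCoeff ≠ 0 := leadingCoeff_ne_zero.mpr hq
  have hcoeff : ∀ k, q.coeff k = q.leadingCoeff * P.coeff k := by
    intro k; conv_lhs => rw [← hfac]
    rw [coeff_C_mul]
  have hR : ∀ μ ∈ R, μ ≠ 0 := by
    intro μ hμ hμ0
    have := Polynomial.isRoot_of_mem_roots hμ
    rw [hμ0] at this
    rw [Polynomial.IsRoot, ← Polynomial.coeff_zero_eq_eval_zero] at this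
    exact h0 this
  have hP0 : P.coeff 0 ≠ 0 := by
    intro h; apply h0; rw [hcoeff 0, h, mul_zero]
  have hP1 : P.coeff 1 = 0 := by
    have := h1; rw [hcoeff 1] at this
    exact (mul_eq_zero.mp this).resolve_left hlc
  have hP2 : P.coeff 2 = 0 := by
    have := h2; rw [hcoeff 2] at this
    exact (mul_eq_zero.mp this).resolve_left hlc
  have hid := coeff_sq_identity R hR
  rw [← hPdef, hP1, hP2] at hid
  have hsum : (R.map fun μ => (μ⁻¹) ^ 2).sum = 0 := by
    have h' : P.coeff 0 ^ 2 * (R.map fun μ => (μ⁻¹) ^ 2).sum = 0 := by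
      linarith [hid]
    exact (mul_eq_zero.mp h').resolve_left (pow_ne_zero 2 hP0)
  have hcard : 0 < Multiset.card R := by rw [hRdef, hsplit]; omega
  obtain ⟨μ, hμ⟩ := Multiset.card_pos_iff_exists_mem.mp hcard
  have hterm : (0:ℝ) < (μ⁻¹) ^ 2 := by
    have : μ⁻¹ ≠ 0 := inv_ne_zero (hR μ hμ)
    positivity
  have hle : (μ⁻¹) ^ 2 ≤ (R.map fun μ => (μ⁻¹) ^ 2).sum := by
    apply Multiset.single_le_sum
    · intro x hx
      obtain ⟨ν, hν, rfl⟩ := Multiset.mem_map.mp hx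
      positivity
    · exact Multiset.mem_map_of_mem _ hμ
  linarith

/-- Key lemma: a real-rooted polynomial with nonzero constant term and two consecutive
vanishing coefficients `r, r+1` (with `r ≥ 1`) has degree ≤ `r - 1`. -/
lemma key_lemma : ∀ r : ℕ, 1 ≤ r → ∀ q : ℝ[X], q ≠ 0 →
    Multiset.card q.roots = q.natDegree → q.coeff 0 ≠ 0 →
    q.coeff r = 0 → q.coeff (r + 1) = 0 → q.natDegree ≤ r - 1 := by
  intro r
  induction r using Nat.strong_induction_on with
  | _ r IH =>
    intro hr1 q hq hsplit h0 hcr hcr1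
    by_contra hcon
    push_neg at hcon
    have hm : r ≤ q.natDegree := by omega
    set m := q.natDegree with hmdef
    have hlc : q.coeff m ≠ 0 := by
      rw [hmdef, ← Polynomial.leadingCoeff]
      exact leadingCoeff_ne_zero.mpr hq
    have hmr : m ≠ r := fun h => hlc (h ▸ hcr)
    have hmr1 : m ≠ r + 1 := fun h => hlc (h ▸ hcr1)
    have hm2 : r + 2 ≤ m := by omega
    rcases Nat.lt_or_ge r 2 with hr2 | hr2
    · have hr1' : r = 1 := by omega
      subst hr1'
      exact no_consec_zero q hq hsplit h0 (by omega) hcr hcr1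
    · set q' := derivative q with hq'def
      have hd1 : q'.natDegree ≤ m - 1 := by
        rw [hq'def]; exact Polynomial.natDegree_derivative_le q
      have hdc : q'.coeff (m - 1) ≠ 0 := by
        rw [hq'def, Polynomial.coeff_derivative]
        have hme : m - 1 + 1 = m := by omega
        rw [hme]
        intro h
        rcases mul_eq_zero.mp h with h' | h'
        · exact hlc h'
        · have h1 : ((m:ℝ) - 1) + 1 = 0 := by push_cast at h' ⊢ <;> linarith
          have h2 : (m:ℝ) = 0 := by linarith
          have : m = 0 := by exact_mod_cast h2
          omega
      have hq'ne : q' ≠ 0 := fun h => hdc (by simp [h])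
      have hd : q'.natDegree = m - 1 :=
        le_antisymm hd1 (Polynomial.le_natDegree_of_ne_zero hdc)
      have hq'split : Multiset.card q'.roots = q'.natDegree := by
        have hub := Polynomial.card_roots' q'
        have hlb := Polynomial.card_roots_le_derivative q
        rw [← hq'def] at hlb
        rw [hsplit] at hlb
        omega
      have hc1 : q'.coeff (r - 1) = 0 := by
        rw [hq'def, Polynomial.coeff_derivative]
        have hre : r - 1 + 1 = r := by omega
        rw [hre, hcr, zero_mul]
      have hc2 : q'.coeff r = 0 := by
        rw [hq'def, Polynomial.coeff_derivative, hcr1, zero_mul]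
      rcases eq_or_ne (q'.coeff 0) 0 with hz | hz
      · have hq1 : q.coeff 1 = 0 := by
          have hzz := hz
          rw [hq'def, Polynomial.coeff_derivative] at hzz
          simpa using hzz
        rcases eq_or_ne (q.coeff 2) 0 with hq2 | hq2
        · exact no_consec_zero q hq hsplit h0 (by omega) hq1 hq2
        · set h := q'.divX with hhdef
          have hxh : q' = X * h := by
            have hx := Polynomial.X_mul_divX_add q'
            rw [hz] at hx
            simpa using hx.symm
          have hh0 : h.coeff 0 ≠ 0 := by
            rw [hhdef, Polynomial.coeff_divX]
            rw [hq'def, Polynomial.coeff_derivative]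
            intro hcontra
            rcases mul_eq_zero.mp hcontra with h' | h'
            · exact hq2 h'
            · norm_num at h'
          have hhne : h ≠ 0 := fun hc => hh0 (by simp [hc])
          have hdh : h.natDegree = m - 2 := by
            have hnm := Polynomial.natDegree_mul (p := (X:ℝ[X])) (q := h)
              Polynomial.X_ne_zero hhne
            rw [← hxh, Polynomial.natDegree_X, hd] at hnm
            omega
          have hhsplit : Multiset.card h.roots = h.natDegree := by
            have hroots : q'.roots = (X:ℝ[X]).roots + h.roots := by
              rw [hxh]; exact Polynomial.roots_mul (by rw [← hxh]; exact hq'ne)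
            have hcards : Multiset.card q'.roots
                = Multiset.card (X:ℝ[X]).roots + Multiset.card h.roots := by
              rw [hroots, Multiset.card_add]
            rw [Polynomial.roots_X] at hcards
            simp only [Multiset.card_singleton] at hcards
            have hub := Polynomial.card_roots' h
            rw [hq'split, hd] at hcards
            omega
          have hhc1 : h.coeff (r - 2) = 0 := by
            rw [hhdef, Polynomial.coeff_divX]
            have hre : r - 2 + 1 = r - 1 := by omega
            rw [hre]; exact hc1
          have hhc2 : h.coeff (r - 2 + 1) = 0 := by
            rw [hhdef, Polynomial.coeff_divX]
            have hre : r - 2 + 1 + 1 = r := by omega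
            rw [hre]; exact hc2
          rcases Nat.lt_or_ge r 3 with hr3 | hr3
          · have hre : r = 2 := by omega
            exact hq2 (hre ▸ hcr)
          · have := IH (r - 2) (by omega) (by omega) h hhne hhsplit hh0 hhc1 hhc2
            omega
      · have hr1eq : r - 1 + 1 = r := by omega
        have := IH (r - 1) (by omega) (by omega) q' hq'ne hq'split hz hc1
          (by rw [hr1eq]; exact hc2)
        omega

/-- If `H_r = H_{r+1} = 0` for some `1 ≤ r < n`, then `H_j = 0` for all
`r ≤ j ≤ n`; in particular at most `r - 1` of the `λᵢ` are nonzero. -/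
theorem newton_vanishing (n : ℕ) (hn : 1 < n) (l : Fin n → ℝ)
    (H : ℕ → ℝ) (hH : ∀ r, H r = esymm n r l / (n.choose r))
    (r : ℕ) (hr1 : 1 ≤ r) (hrn : r < n)
    (hr : H r = 0) (hr' : H (r + 1) = 0) :
    (∀ j : ℕ, r ≤ j → j ≤ n → H j = 0) ∧
      ((Finset.univ : Finset (Fin n)).filter (fun i => l i ≠ 0)).card ≤ r - 1 := by
  classical
  set T := (Finset.univ : Finset (Fin n)).filter (fun i => l i ≠ 0) with hTdef
  have hTl : ∀ i ∈ T, l i ≠ 0 := fun i hi => (Finset.mem_filter.mp hi).2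
  have hesymm : ∀ j : ℕ, esymm n j l = ∑ s ∈ T.powersetCard j, ∏ i ∈ s, l i := by
    intro j
    rw [esymm]
    refine (Finset.sum_subset (Finset.powersetCard_mono (Finset.subset_univ T)) ?_).symm
    intro s hs hns
    rw [Finset.mem_powersetCard] at hs hns
    have hnsub : ¬ s ⊆ T := fun h => hns ⟨h, hs.2⟩
    obtain ⟨i, hi, hiT⟩ := Finset.not_subset.mp hnsub
    refine Finset.prod_eq_zero hi ?_
    by_contra h
    exact hiT (Finset.mem_filter.mpr ⟨Finset.mem_univ i, h⟩)
  have hchoose : ∀ j, j ≤ n → ((n.choose j : ℝ) ≠ 0) := by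
    intro j hj
    exact_mod_cast (Nat.choose_pos hj).ne'
  have her : esymm n r l = 0 := by
    have h := (hH r).symm.trans hr
    rcases div_eq_zero_iff.mp h with h' | h'
    · exact h'
    · exact absurd h' (hchoose r (le_of_lt hrn))
  have her' : esymm n (r + 1) l = 0 := by
    have h := (hH (r + 1)).symm.trans hr'
    rcases div_eq_zero_iff.mp h with h' | h'
    · exact h'
    · exact absurd h' (hchoose (r + 1) (by omega))
  set R : Multiset ℝ := T.val.map l with hRdef
  have hRcard : Multiset.card R = T.card := by
    rw [hRdef, Multiset.card_map]; rfl
  have hRne : ∀ μ ∈ R, μ ≠ 0 := by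
    intro μ hμ
    obtain ⟨i, hi, rfl⟩ := Multiset.mem_map.mp hμ
    exact hTl i hi
  have hResymm : ∀ j : ℕ, R.esymm j = esymm n j l := by
    intro j
    rw [hRdef, Finset.esymm_map_val, hesymm j]
  set q : ℝ[X] := (R.map fun μ => X - C μ).prod with hqdef
  have hmonic : q.Monic :=
    monic_multiset_prod_of_monic _ _ (fun μ _ => monic_X_sub_C μ)
  have hqne : q ≠ 0 := hmonic.ne_zero
  have hqdeg : q.natDegree = T.card := by
    rw [hqdef, natDegree_multiset_prod_X_sub_C_eq_card, hRcard]
  have hqroots : q.roots = R := roots_multiset_prod_X_sub_C R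
  have hqsplit : Multiset.card q.roots = q.natDegree := by
    rw [hqroots, hqdeg, hRcard]
  have hq0 : q.coeff 0 ≠ 0 := by
    rw [coeff_zero_eq_eval_zero, hqdef, eval_multiset_prod, Multiset.map_map]
    apply Multiset.prod_ne_zero
    intro hmem
    obtain ⟨μ, hμ, hev⟩ := Multiset.mem_map.mp hmem
    simp only [Function.comp_apply, eval_sub, eval_X, eval_C, zero_sub] at hev
    exact hRne μ hμ (neg_eq_zero.mp hev)
  have hcoeff : ∀ k : ℕ, k ≤ T.card →
      q.coeff k = (-1) ^ (T.card - k) * esymm n (T.card - k) l := by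
    intro k hk
    have h := Multiset.prod_X_sub_C_coeff R (k := k) (by omega)
    rw [hRcard, hResymm] at h
    rw [hqdef]
    exact h
  -- the cardinality bound
  have hTprod : (∏ i ∈ T, l i) ≠ 0 := Finset.prod_ne_zero_iff.mpr hTl
  have hesymm_card : esymm n T.card l = ∏ i ∈ T, l i := by
    rw [hesymm, Finset.powersetCard_self, Finset.sum_singleton]
  have hcard : T.card ≤ r - 1 := by
    by_contra hcon
    push_neg at hcon
    have hge : r ≤ T.card := by omega
    rcases eq_or_ne T.card r with hc | hc1
    · exact hTprod (by rw [← hesymm_card, hc]; exact her)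
    rcases eq_or_ne T.card (r + 1) with hc | hc2
    · exact hTprod (by rw [← hesymm_card, hc]; exact her')
    have hge2 : r + 2 ≤ T.card := by omega
    set k := T.card - (r + 1) with hk
    have hk1 : 1 ≤ k := by omega
    have hck : q.coeff k = 0 := by
      rw [hcoeff k (by omega)]
      have he : T.card - k = r + 1 := by omega
      rw [he, her', mul_zero]
    have hck1 : q.coeff (k + 1) = 0 := by
      rw [hcoeff (k + 1) (by omega)]
      have he : T.card - (k + 1) = r := by omega
      rw [he, her, mul_zero]
    have := key_lemma k hk1 q hqne hqsplit hq0 hck hck1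
    omega
  refine ⟨?_, hcard⟩
  intro j hrj hjn
  rw [hH j, hesymm j]
  have hempty : T.powersetCard j = ∅ :=
    Finset.powersetCard_eq_empty.mpr (by omega)
  rw [hempty, Finset.sum_empty, zero_div]
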